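/- Let R be a commutative noetherian ring, let W₀ be the set of minimal prime ideals of R, and let S = R \ ⋃_{p ∈ W₀} p. Then the localization S⁻¹R is an artinian ring, and the canonical ring homomorphism S⁻¹R → ∏_{p ∈ W₀} R_p (induced by the localization maps R → R_p) is an isomorphism. -/

import Mathlib

noncomputable section

variable (R : Type) [CommRing R]

instance minimalPrimes.isPrime' (p : minimalPrimes R) : Ideal.IsPrime (p : Ideal R) :=
  p.2.1.1

/-- The multiplicative set `S = R \ ⋃_{p minimal prime} p`. -/
def minComplement : Submonoid R where
  carrier := {r : R | ∀ p ∈ minimalPrimes R, r ∉ p}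
  one_mem' := by
    intro p hp h1
    exact hp.1.1.ne_top ((Ideal.eq_top_iff_one p).mpr h1)
  mul_mem' := by
    intro a b ha hb p hp hab
    exact (hp.1.1.mem_or_mem hab).elim (ha p hp) (hb p hp)

/-- The canonical ring homomorphism `S⁻¹R → ∏_{p minimal} R_p` induced by the localization
maps `R → R_p`. -/
def canonicalMap :
    Localization (minComplement R) →+*
      ((p : minimalPrimes R) → Localization.AtPrime (p : Ideal R)) :=
  IsLocalization.lift (M := minComplement R)
    (g := Pi.ringHom fun p : minimalPrimes R => algebraMap R (Localization.AtPrime (p : Ideal R)))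
    (by
      intro s
      choose u hu using fun p : minimalPrimes R =>
        (IsLocalization.map_units (M := (p : Ideal R).primeCompl)
          (Localization.AtPrime (p : Ideal R)) ⟨(s : R), s.2 p.1 p.2⟩).exists_right_inv
      exact isUnit_iff_exists_inv.mpr ⟨u, funext hu⟩)

/-! ### Auxiliary results -/

/-- Transfer of the artinian property along a surjective change of scalars. -/
theorem aux_isArtinian_of_surj (A B M : Type*) [CommRing A] [Ring B] [Algebra A B]
    [AddCommGroup M] [Module A M] [Module B M] [IsScalarTower A B M]
    (hsur : Function.Surjective (algebraMap A B)) (h : IsArtinian B M) : IsArtinian A M := by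
  let g : Submodule A M → Submodule B M := fun p =>
    { carrier := p
      add_mem' := fun ha hb => p.add_mem ha hb
      zero_mem' := p.zero_mem
      smul_mem' := by
        intro b x hx
        obtain ⟨a, rfl⟩ := hsur b
        rw [algebraMap_smul]
        exact p.smul_mem a hx }
  have hmem : ∀ (p : Submodule A M) (x : M), x ∈ g p ↔ x ∈ p := fun _ _ => Iff.rfl
  let f : Submodule A M ↪o Submodule B M :=
    { toFun := g
      inj' := by
        intro p q hpq
        ext x
        rw [← hmem p, ← hmem q, hpq]
      map_rel_iff' := by
        intro p q
        constructor
        · intro hle x hx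
          exact (hmem q x).mp (hle ((hmem p x).mpr hx))
        · intro hle x hx
          exact (hmem q x).mpr (hle ((hmem p x).mp hx)) }
  exact ⟨f.ltEmbedding.wellFounded h.wf⟩

/-- A "baby Hopkins" induction: in a noetherian ring `A` with an ideal `I` such that `A ⧸ I` is
artinian, any ideal killed by a power of `I` is an artinian `A`-module. -/
theorem aux_isArtinian_ideal {A : Type} [CommRing A] [IsNoetherianRing A]
    (I : Ideal A) (hA : IsArtinianRing (A ⧸ I)) :
    ∀ (k : ℕ) (N : Ideal A), I ^ k • N = ⊥ → IsArtinian A N := by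
  intro k
  induction k with
  | zero =>
    intro N hN
    rw [pow_zero, Ideal.one_eq_top, Submodule.top_smul] at hN
    rw [hN]
    infer_instance
  | succ k ih =>
    intro N hN
    have hNmap : Submodule.map N.subtype (I • (⊤ : Submodule A N)) = I • N := by
      rw [Submodule.map_smul'', Submodule.map_top, Submodule.range_subtype]
    -- the submodule part is artinian
    have h1 : IsArtinian A (I • N : Ideal A) := by
      apply ih
      rw [smul_smul, ← pow_succ, hN]
    have h2 : IsArtinian A ↥(I • (⊤ : Submodule A N)) := by
      refine isArtinian_of_linearEquiv (R := A)
        ((Submodule.equivMapOfInjective N.subtype N.injective_subtype _).trans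
          (LinearEquiv.ofEq _ _ hNmap)).symm
    -- the quotient part is artinian
    have h3 : IsArtinian A (N ⧸ (I • (⊤ : Submodule A N))) := by
      haveI : Module.Finite A N := Module.Finite.iff_fg.mpr (IsNoetherian.noetherian N)
      haveI : Module.Finite (A ⧸ I) (N ⧸ (I • (⊤ : Submodule A N))) :=
        Module.Finite.of_restrictScalars_finite A (A ⧸ I) _
      haveI : IsArtinian (A ⧸ I) (N ⧸ (I • (⊤ : Submodule A N))) :=
        isArtinian_of_fg_of_artinian'
      exact aux_isArtinian_of_surj A (A ⧸ I) _
        (Ideal.Quotient.algebraMap_eq I ▸ Ideal.Quotient.mk_surjective) this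
    exact ((isArtinian_iff_submodule_quotient _).mpr ⟨h2, h3⟩)

/-- A noetherian ring with a nilpotent ideal whose quotient is artinian is artinian. -/
theorem aux_isArtinianRing {A : Type} [CommRing A] [IsNoetherianRing A]
    (I : Ideal A) (hA : IsArtinianRing (A ⧸ I)) (hI : IsNilpotent I) : IsArtinianRing A := by
  obtain ⟨n, hn⟩ := hI
  have := aux_isArtinian_ideal I hA n ⊤ (by rw [Ideal.smul_eq_mul, Ideal.mul_top, hn]; rfl)
  exact isArtinian_of_linearEquiv (Submodule.topEquiv (R := A) (M := A))

/-- A finite product of artinian commutative rings is artinian. -/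
theorem aux_pi_artinian (ι : Type) [Finite ι] (A : ι → Type) [∀ i, CommRing (A i)]
    [hA : ∀ i, IsArtinianRing (A i)] : IsArtinianRing (∀ i, A i) := by
  classical
  letI alg : ∀ i, Algebra (∀ j, A j) (A i) := fun i => (Pi.evalRingHom A i).toAlgebra
  haveI h1 : ∀ i, IsArtinian (∀ j, A j) (A i) := fun i =>
    aux_isArtinian_of_surj (∀ j, A j) (A i) (A i)
      (Function.surjective_eval i) (hA i)
  haveI hpi : IsArtinian (∀ j, A j) (∀ i, A i) := isArtinian_pi
  exact hpi

variable {R}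

/-- The maximal ideal of the localization at a minimal prime is the nilradical. -/
theorem aux_max_eq_nilradical {q : Ideal R} [q.IsPrime]
    (hq : q ∈ minimalPrimes R) :
    IsLocalRing.maximalIdeal (Localization.AtPrime q) = nilradical (Localization.AtPrime q) := by
  refine le_antisymm ?_ (nilradical_le_prime _)
  rw [nilradical_eq_sInf]
  refine le_sInf ?_
  rintro J hJ
  haveI : J.IsPrime := hJ
  have hc : J.under R = q := by
    have hle : J.comap (algebraMap R (Localization.AtPrime q)) ≤ q :=
      (Ideal.comap_mono (IsLocalRing.le_maximalIdeal hJ.ne_top)).trans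
        (IsLocalization.AtPrime.under_maximalIdeal (Localization.AtPrime q) q).le
    exact le_antisymm hle (hq.2 ⟨Ideal.IsPrime.comap _, bot_le⟩ hle)
  rw [← IsLocalization.map_under q.primeCompl (Localization.AtPrime q) J, hc,
    IsLocalization.AtPrime.map_eq_maximalIdeal]

/-- The localization of a noetherian ring at a minimal prime is artinian. -/
theorem aux_artinian_at_min [IsNoetherianRing R] {q : Ideal R} [q.IsPrime]
    (hq : q ∈ minimalPrimes R) : IsArtinianRing (Localization.AtPrime q) := by
  haveI : IsNoetherianRing (Localization.AtPrime q) :=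
    IsLocalization.isNoetherianRing q.primeCompl _ inferInstance
  letI := Ideal.Quotient.field (IsLocalRing.maximalIdeal (Localization.AtPrime q))
  have har : IsArtinianRing (Localization.AtPrime q ⧸
      IsLocalRing.maximalIdeal (Localization.AtPrime q)) :=
    @DivisionRing.instIsArtinianRing _ (Field.toDivisionRing)
  refine aux_isArtinianRing (IsLocalRing.maximalIdeal (Localization.AtPrime q)) har ?_
  rw [aux_max_eq_nilradical hq]
  exact IsNoetherianRing.isNilpotent_nilradical _

theorem aux_mem_of_map_zero (q : minimalPrimes R) {x : R}
    (h : algebraMap R (Localization.AtPrime (q : Ideal R)) x = 0) : x ∈ (q : Ideal R) := by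
  refine (IsLocalization.AtPrime.to_map_mem_maximal_iff
    (Localization.AtPrime (q : Ideal R)) (q : Ideal R) x).mp ?_
  rw [h]; exact zero_mem _

/-- For each minimal prime `p` there is an element outside `p` whose image in every other
localization at a minimal prime vanishes. -/
theorem aux_exists_e [IsNoetherianRing R] (p : minimalPrimes R) :
    ∃ e : R, e ∉ (p : Ideal R) ∧ ∀ q : minimalPrimes R, q ≠ p →
      algebraMap R (Localization.AtPrime (q : Ideal R)) e = 0 := by
  classical
  have hfin := minimalPrimes.finite_of_isNoetherianRing R
  haveI : Fintype (minimalPrimes R) := hfin.fintype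
  -- step 1: find t outside p but in every other minimal prime
  have hstep1 : ∃ t : R, t ∉ (p : Ideal R) ∧ ∀ q : minimalPrimes R, q ≠ p → t ∈ (q : Ideal R) := by
    set s : Finset (Ideal R) := hfin.toFinset.erase (p : Ideal R) with hs
    have hnle : ¬ s.inf id ≤ (p : Ideal R) := by
      intro hle
      obtain ⟨q, hqs, hqp⟩ := (Ideal.IsPrime.inf_le' (minimalPrimes.isPrime' R p)).mp hle
      obtain ⟨hqne, hqF⟩ := Finset.mem_erase.mp hqs
      have hqmin : q ∈ minimalPrimes R := hfin.mem_toFinset.mp hqF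
      exact hqne (le_antisymm hqp (p.2.2 hqmin.1 hqp))
    obtain ⟨t, htinf, htp⟩ := SetLike.not_le_iff_exists.mp hnle
    refine ⟨t, htp, fun q hq => ?_⟩
    have : s.inf id ≤ (q : Ideal R) :=
      Finset.inf_le (Finset.mem_erase.mpr ⟨fun h => hq (Subtype.ext h), hfin.mem_toFinset.mpr q.2⟩)
    exact this htinf
  obtain ⟨t, htp, htq⟩ := hstep1
  -- step 2: powers of t are killed in all other localizations
  have hnil : ∀ q : minimalPrimes R, q ≠ p →
      IsNilpotent (algebraMap R (Localization.AtPrime (q : Ideal R)) t) := by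
    intro q hq
    rw [← mem_nilradical, ← aux_max_eq_nilradical q.2]
    exact (IsLocalization.AtPrime.to_map_mem_maximal_iff _ (q : Ideal R) t).mpr (htq q hq)
  let n : minimalPrimes R → ℕ := fun q => if h : q ≠ p then (hnil q h).choose else 0
  set N : ℕ := Finset.univ.sup n + 1 with hN
  refine ⟨t ^ N, fun h => htp ((minimalPrimes.isPrime' R p).mem_of_pow_mem N h), ?_⟩
  intro q hq
  rw [map_pow]
  refine pow_eq_zero_of_le (m := n q) ?_ ?_
  · exact le_trans (Finset.le_sup (Finset.mem_univ q)) (Nat.le_succ _)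
  · have := (hnil q hq).choose_spec
    simpa only [n, dif_pos hq] using this

/-- The product of the localizations at the minimal primes is a localization of `R` at
`minComplement R`. -/
theorem aux_isLocalization [IsNoetherianRing R] :
    IsLocalization (minComplement R)
      (∀ p : minimalPrimes R, Localization.AtPrime (p : Ideal R)) := by
  classical
  haveI : Fintype (minimalPrimes R) := (minimalPrimes.finite_of_isNoetherianRing R).fintype
  choose e he0 he1 using aux_exists_e (R := R)
  have hemem : ∀ p q : minimalPrimes R, q ≠ p → e p ∈ (q : Ideal R) := fun p q h =>
    aux_mem_of_map_zero q (he1 p q h)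
  -- membership of the "glued" elements in the multiplicative set
  have hglue : ∀ c : minimalPrimes R → R, (∀ p : minimalPrimes R, c p ∉ (p : Ideal R)) →
      (∑ p : minimalPrimes R, e p * c p) ∈ minComplement R := by
    intro c hc q hq
    set q' : minimalPrimes R := ⟨q, hq⟩
    intro hsum
    have hrest : ∑ p ∈ Finset.univ.erase q', e p * c p ∈ q := by
      refine Ideal.sum_mem _ fun p hp => ?_
      exact Ideal.mul_mem_right _ _ (hemem p q' (Finset.mem_erase.mp hp).1.symm)
    have hadd : e q' * c q' + ∑ p ∈ Finset.univ.erase q', e p * c p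
        = ∑ p : minimalPrimes R, e p * c p :=
      Finset.add_sum_erase Finset.univ (fun p => e p * c p) (Finset.mem_univ q')
    have hmain : e q' * c q' ∈ q := by
      have := Ideal.sub_mem q hsum hrest
      rwa [← hadd, add_sub_cancel_right] at this
    exact ((minimalPrimes.isPrime' R q').mem_or_mem hmain).elim (he0 q') (hc q')
  refine (isLocalization_iff _ _).mpr ⟨?_, ?_, ?_⟩
  · -- map_units
    intro s
    choose u hu using fun p : minimalPrimes R =>
      (IsLocalization.map_units (M := (p : Ideal R).primeCompl)
        (Localization.AtPrime (p : Ideal R)) ⟨(s : R), s.2 p.1 p.2⟩).exists_right_inv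
    exact isUnit_iff_exists_inv.mpr ⟨u, funext hu⟩
  · -- surj
    intro z
    choose x hx using fun p : minimalPrimes R =>
      IsLocalization.surj (M := (p : Ideal R).primeCompl) (z p)
    set r : minimalPrimes R → R := fun p => (x p).1 with hr
    set s : minimalPrimes R → R := fun p => ((x p).2 : R) with hsdef
    have hs : ∀ p : minimalPrimes R, s p ∉ (p : Ideal R) := fun p => (x p).2.2
    have hrs : ∀ p : minimalPrimes R,
        z p * algebraMap R (Localization.AtPrime (p : Ideal R)) (s p)
          = algebraMap R (Localization.AtPrime (p : Ideal R)) (r p) := fun p => hx p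
    refine ⟨⟨∑ p, e p * r p, ⟨∑ p, e p * s p, hglue _ hs⟩⟩, ?_⟩
    funext p
    have hker : ∀ q : minimalPrimes R, q ≠ p →
        algebraMap R (Localization.AtPrime (p : Ideal R)) (e q) = 0 := fun q hq =>
      he1 q p (fun h => hq h.symm)
    show z p * algebraMap R _ (∑ q, e q * s q) = algebraMap R _ (∑ q, e q * r q)
    rw [map_sum, map_sum]
    rw [Finset.sum_eq_single p (fun q _ hq => by rw [map_mul, hker q hq, zero_mul])
      (fun h => absurd (Finset.mem_univ p) h),
      Finset.sum_eq_single p (fun q _ hq => by rw [map_mul, hker q hq, zero_mul])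
      (fun h => absurd (Finset.mem_univ p) h)]
    rw [map_mul, map_mul, ← mul_assoc, mul_comm (z p) _, mul_assoc, hrs p]
  · -- exists_of_eq
    intro x y h
    have h' : ∀ p : minimalPrimes R,
        algebraMap R (Localization.AtPrime (p : Ideal R)) x
          = algebraMap R (Localization.AtPrime (p : Ideal R)) y := fun p => congrFun h p
    choose c hc using fun p : minimalPrimes R =>
      IsLocalization.exists_of_eq (M := (p : Ideal R).primeCompl) (h' p)
    refine ⟨⟨∑ p, e p * (c p : R), hglue _ fun p => (c p).2⟩, ?_⟩
    simp only [Finset.sum_mul]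
    exact Finset.sum_congr rfl fun p _ => by rw [mul_assoc, mul_assoc, hc p]

/-- Let `R` be a commutative noetherian ring, `W₀` the set of its minimal
primes and `S = R \ ⋃_{p ∈ W₀} p`. Then `S⁻¹R` is an artinian ring and the canonical ring
homomorphism `S⁻¹R → ∏_{p ∈ W₀} R_p` induced by the localization maps is an isomorphism. -/
theorem stmt_15 (R : Type) [CommRing R] [IsNoetherianRing R] :
    IsArtinianRing (Localization (minComplement R)) ∧
    Function.Bijective (canonicalMap R) := by
  haveI hfin : Finite (minimalPrimes R) :=
    (minimalPrimes.finite_of_isNoetherianRing R).to_subtype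
  haveI hloc := aux_isLocalization (R := R)
  haveI hart : ∀ p : minimalPrimes R, IsArtinianRing (Localization.AtPrime (p : Ideal R)) :=
    fun p => aux_artinian_at_min p.2
  haveI hB : IsArtinianRing (∀ p : minimalPrimes R, Localization.AtPrime (p : Ideal R)) :=
    aux_pi_artinian _ _
  let e := IsLocalization.algEquiv (minComplement R) (Localization (minComplement R))
      (∀ p : minimalPrimes R, Localization.AtPrime (p : Ideal R))
  have hcan : ⇑(canonicalMap R) = ⇑e := by
    have : canonicalMap R =
        (e : Localization (minComplement R) →ₐ[R]
          (∀ p : minimalPrimes R, Localization.AtPrime (p : Ideal R))).toRingHom := by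
      apply IsLocalization.ringHom_ext (minComplement R)
      refine RingHom.ext fun r => ?_
      show canonicalMap R (algebraMap R _ r) = e (algebraMap R _ r)
      rw [AlgEquiv.commutes]
      exact IsLocalization.lift_eq _ r
    exact congrArg _ this
  constructor
  · exact e.symm.surjective.isArtinianRing
  · rw [hcan]
    exact e.bijective

end
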